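/- For any finite directed graph with IN edges, the number of open triangles (paths a₁→a₂→a₃) can be as large as Θ(IN²) while the number of closed triangles is at most IN^{3/2}; hence any algorithm that materializes all open triangles as an intermediate result has worst-case cost Ω(IN²), asymptotically larger than IN^{3/2} as IN → ∞. -/

import Mathlib

open Filter

def starG (N : ℕ) : Finset (ℕ × ℕ) :=
  (Finset.Icc 1 N ×ˢ {0}) ∪ ({0} ×ˢ Finset.Icc 1 N)

lemma mem_starG {N x y : ℕ} :
    (x, y) ∈ starG N ↔ (1 ≤ x ∧ x ≤ N ∧ y = 0) ∨ (x = 0 ∧ 1 ≤ y ∧ y ≤ N) := by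
  simp [starG, Finset.mem_union, Finset.mem_product, and_assoc]
  constructor
  · rintro (⟨a, h1, h2, rfl, rfl⟩ | ⟨a, h1, h2, rfl, rfl⟩) <;> omega
  · rintro (⟨h1, h2, rfl⟩ | ⟨rfl, h1, h2⟩)
    all_goals omega

lemma card_starG (N : ℕ) : (starG N).card = 2 * N := by
  rw [starG, Finset.card_union_of_disjoint, Finset.card_product, Finset.card_product]
  · simp; ring
  · rw [Finset.disjoint_left]
    rintro ⟨x, y⟩ h h'
    simp only [Finset.mem_product, Finset.mem_Icc, Finset.mem_singleton] at h h'
    omega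

lemma closed_empty (N : ℕ) :
    {p : ℕ × ℕ × ℕ | (p.1, p.2.1) ∈ starG N ∧ (p.2.1, p.2.2) ∈ starG N ∧
      (p.2.2, p.1) ∈ starG N} = ∅ := by
  ext ⟨a, b, c⟩
  simp only [Set.mem_setOf_eq, Set.mem_empty_iff_false, iff_false, mem_starG]
  omega

lemma open_finite (N : ℕ) :
    ({p : ℕ × ℕ × ℕ | (p.1, p.2.1) ∈ starG N ∧ (p.2.1, p.2.2) ∈ starG N}).Finite := by
  apply Set.Finite.subset (Set.finite_Icc ((0:ℕ),(0:ℕ),(0:ℕ)) (N, N, N))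
  rintro ⟨a, b, c⟩ ⟨h1, h2⟩
  dsimp only at h1 h2
  rw [mem_starG] at h1 h2
  simp only [Set.mem_Icc, Prod.mk_le_mk]
  omega

lemma open_lower (N : ℕ) :
    (N : ℝ)^2 ≤ (({p : ℕ × ℕ × ℕ | (p.1, p.2.1) ∈ starG N ∧ (p.2.1, p.2.2) ∈ starG N}).ncard : ℝ) := by
  have hsub : ↑((Finset.Icc 1 N ×ˢ Finset.Icc 1 N).image (fun q : ℕ × ℕ => (q.1, 0, q.2)))
      ⊆ {p : ℕ × ℕ × ℕ | (p.1, p.2.1) ∈ starG N ∧ (p.2.1, p.2.2) ∈ starG N} := by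
    rintro ⟨a, b, c⟩ h
    simp only [Finset.coe_image, Set.mem_image, Finset.mem_coe, Finset.mem_product,
      Finset.mem_Icc] at h
    obtain ⟨⟨i, j⟩, ⟨hi, hj⟩, heq⟩ := h
    cases heq
    refine ⟨?_, ?_⟩ <;> dsimp only <;> rw [mem_starG] <;> omega
  have hcard : ((Finset.Icc 1 N ×ˢ Finset.Icc 1 N).image (fun q : ℕ × ℕ => (q.1, 0, q.2))).card = N^2 := by
    rw [Finset.card_image_of_injective, Finset.card_product, Nat.card_Icc]
    · simp [sq]
    · intro p q h
      simpa [Prod.ext_iff] using h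
  have := Set.ncard_le_ncard hsub (open_finite N)
  rw [Set.ncard_coe_finset, hcard] at this
  exact_mod_cast this

theorem open_triangles_beat_agm :
    ∃ G : ℕ → Finset (ℕ × ℕ),
      Tendsto (fun N => (G N).card) atTop atTop ∧
      (∀ N, (({p : ℕ × ℕ × ℕ |
            (p.1, p.2.1) ∈ G N ∧ (p.2.1, p.2.2) ∈ G N ∧ (p.2.2, p.1) ∈ G N}).ncard : ℝ)
          ≤ ((G N).card : ℝ) ^ ((3 : ℝ) / 2)) ∧
      Tendsto (fun N =>
          (({p : ℕ × ℕ × ℕ | (p.1, p.2.1) ∈ G N ∧ (p.2.1, p.2.2) ∈ G N}).ncard : ℝ)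
            / ((G N).card : ℝ) ^ ((3 : ℝ) / 2)) atTop atTop := by
  refine ⟨starG, ?_, ?_, ?_⟩
  · apply tendsto_atTop_mono (fun N => ?_) tendsto_id
    simp only [id_eq]; rw [card_starG]; omega
  · intro N
    rw [closed_empty]
    simp only [Set.ncard_empty, Nat.cast_zero]
    exact Real.rpow_nonneg (by positivity) _
  · have hg : Tendsto (fun N : ℕ => ((N : ℝ) ^ ((1:ℝ)/2)) / 4) atTop atTop := by
      exact (((tendsto_rpow_atTop (by norm_num)).comp
        tendsto_natCast_atTop_atTop)).atTop_div_const (by norm_num)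
    apply tendsto_atTop_mono' atTop ?_ hg
    filter_upwards [eventually_ge_atTop 1] with N hN
    have hN' : (1:ℝ) ≤ (N:ℝ) := by exact_mod_cast hN
    have hNpos : (0:ℝ) < (N:ℝ) := by linarith
    have hD : (0:ℝ) < ((starG N).card : ℝ) ^ ((3:ℝ)/2) := by
      apply Real.rpow_pos_of_pos
      rw [card_starG]
      have : (0:ℕ) < 2 * N := by omega
      exact_mod_cast this
    have step1 : ((N:ℝ)^((1:ℝ)/2)) / 4 ≤ (N:ℝ)^2 / ((starG N).card : ℝ) ^ ((3:ℝ)/2) := by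
      rw [div_le_div_iff₀ (by norm_num) hD, card_starG]
      push_cast
      have key : (2*(N:ℝ))^((3:ℝ)/2) = 2^((3:ℝ)/2) * (N:ℝ)^((3:ℝ)/2) :=
        Real.mul_rpow (by norm_num) (by positivity)
      rw [key]
      have h2 : (2:ℝ)^((3:ℝ)/2) ≤ 4 := by
        have := Real.rpow_le_rpow_of_exponent_le (x := (2:ℝ)) (by norm_num)
          (show (3:ℝ)/2 ≤ 2 by norm_num)
        calc (2:ℝ)^((3:ℝ)/2) ≤ (2:ℝ)^(2:ℝ) := this
          _ = 4 := by
            rw [show ((2:ℝ):ℝ) = ((2:ℕ):ℝ) by norm_num, Real.rpow_natCast]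
            norm_num
      have hmul : (N:ℝ)^((1:ℝ)/2) * (N:ℝ)^((3:ℝ)/2) = (N:ℝ)^2 := by
        rw [← Real.rpow_add hNpos]
        norm_num
      calc (N:ℝ)^((1:ℝ)/2) * (2^((3:ℝ)/2) * (N:ℝ)^((3:ℝ)/2))
          = 2^((3:ℝ)/2) * ((N:ℝ)^((1:ℝ)/2) * (N:ℝ)^((3:ℝ)/2)) := by ring
        _ = 2^((3:ℝ)/2) * (N:ℝ)^2 := by rw [hmul]
        _ ≤ 4 * (N:ℝ)^2 := by nlinarith [sq_nonneg (N:ℝ)]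
        _ = (N:ℝ)^2 * 4 := by ring
    refine step1.trans ?_
    gcongr
    exact open_lower N
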